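/- Let C ⊆ R^n be nonempty, closed, convex, and line-free. For each ν let P^ν be a polyhedron that is an (ε^ν, δ^ν)-approximation of C, and suppose (ε^ν, δ^ν) → (0,0). Then for every extreme point c of C there exists a sequence x^ν → c with x^ν ∈ conv(vert P^ν). -/

import Mathlib

open Metric Set Filter
open scoped ENNReal Pointwise Topology RealInnerProductSpace

noncomputable section

/-- The recession cone of a set `C`. -/
def recc {n : ℕ} (C : Set (EuclideanSpace ℝ (Fin n))) : Set (EuclideanSpace ℝ (Fin n)) :=
  {d | ∀ x ∈ C, ∀ t : ℝ, 0 ≤ t → x + t • d ∈ C}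

/-- The excess of `C₁` over `C₂`: `sup_{c₁ ∈ C₁} inf_{c₂ ∈ C₂} ‖c₁ - c₂‖`, valued in `ℝ≥0∞`. -/
def exc {n : ℕ} (C₁ C₂ : Set (EuclideanSpace ℝ (Fin n))) : ℝ≥0∞ :=
  ⨆ x ∈ C₁, EMetric.infEdist x C₂

/-- The conical hull of a set: all nonnegative multiples of its elements, together with `0`. -/
def coneHull {n : ℕ} (D : Set (EuclideanSpace ℝ (Fin n))) : Set (EuclideanSpace ℝ (Fin n)) :=
  {x | ∃ t : ℝ, 0 ≤ t ∧ ∃ d ∈ convexHull ℝ D, x = t • d}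

/-- A polyhedron: `conv V + cone D` for finite sets `V`, `D`. -/
def IsPolyhedron {n : ℕ} (P : Set (EuclideanSpace ℝ (Fin n))) : Prop :=
  ∃ V D : Set (EuclideanSpace ℝ (Fin n)), V.Finite ∧ D.Finite ∧
    P = convexHull ℝ V + coneHull D

/-- `P` is an `(ε, δ)`-approximation of `C`: `P` is a line-free polyhedron with
(i) `exc(vert P, C) ≤ ε`, (ii) truncated Hausdorff distance between the recession cones
at most `δ`, (iii) `P ⊇ C`. -/
def IsEDApprox {n : ℕ} (P C : Set (EuclideanSpace ℝ (Fin n))) (ε δ : ℝ) : Prop :=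
  IsPolyhedron P ∧ (∀ d ∈ recc P, -d ∈ recc P → d = 0) ∧
  exc (Set.extremePoints ℝ P) C ≤ ENNReal.ofReal ε ∧
  Metric.hausdorffDist (recc P ∩ Metric.closedBall 0 1)
    (recc C ∩ Metric.closedBall 0 1) ≤ δ ∧
  C ⊆ P
section Aux
variable {n : ℕ}


lemma zero_mem_recc (C : Set (EuclideanSpace ℝ (Fin n))) : (0 : EuclideanSpace ℝ (Fin n)) ∈ recc C := by
  intro x hx t ht; simpa using hx

lemma smul_mem_recc {C : Set (EuclideanSpace ℝ (Fin n))} {d : EuclideanSpace ℝ (Fin n)}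
    (hd : d ∈ recc C) {t : ℝ} (ht : 0 ≤ t) : t • d ∈ recc C := by
  intro x hx s hs
  rw [smul_smul]
  exact hd x hx (s * t) (mul_nonneg hs ht)

lemma isClosed_recc {C : Set (EuclideanSpace ℝ (Fin n))} (hC : IsClosed C) : IsClosed (recc C) := by
  have : recc C = ⋂ (x : C) (t : Set.Ici (0:ℝ)), (fun d : EuclideanSpace ℝ (Fin n) => x.1 + t.1 • d) ⁻¹' C := by
    ext d
    simp only [recc, Set.mem_setOf_eq, Set.mem_iInter, Set.mem_preimage, Subtype.forall,
      Set.mem_Ici]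
  rw [this]
  exact isClosed_iInter fun x => isClosed_iInter fun t =>
    hC.preimage (continuous_const.add (continuous_id.const_smul t.1))

lemma coneHull_smul {D : Set (EuclideanSpace ℝ (Fin n))} {r : EuclideanSpace ℝ (Fin n)}
    (hr : r ∈ coneHull D) {t : ℝ} (ht : 0 ≤ t) : t • r ∈ coneHull D := by
  obtain ⟨s, hs, d, hd, rfl⟩ := hr
  exact ⟨t * s, mul_nonneg ht hs, d, hd, (smul_smul t s d)⟩

lemma coneHull_add {D : Set (EuclideanSpace ℝ (Fin n))} {r s : EuclideanSpace ℝ (Fin n)}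
    (hr : r ∈ coneHull D) (hs : s ∈ coneHull D) : r + s ∈ coneHull D := by
  obtain ⟨a, ha, d₁, hd₁, rfl⟩ := hr
  obtain ⟨b, hb, d₂, hd₂, rfl⟩ := hs
  rcases eq_or_lt_of_le (add_nonneg ha hb) with h | h
  · have ha0 : a = 0 := by linarith [ha, hb]
    have hb0 : b = 0 := by linarith
    exact ⟨0, le_refl 0, d₁, hd₁, by simp [ha0, hb0]⟩
  · refine ⟨a + b, le_of_lt h, (a/(a+b)) • d₁ + (b/(a+b)) • d₂, ?_, ?_⟩
    · exact (convex_convexHull ℝ D) hd₁ hd₂ (div_nonneg ha h.le) (div_nonneg hb h.le)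
        (by field_simp)
    · rw [smul_add, smul_smul, smul_smul]
      field_simp
  
lemma zero_mem_coneHull {D : Set (EuclideanSpace ℝ (Fin n))} (hD : D.Nonempty) :
    (0 : EuclideanSpace ℝ (Fin n)) ∈ coneHull D := by
  obtain ⟨d, hd⟩ := hD
  exact ⟨0, le_refl 0, d, subset_convexHull ℝ D hd, by simp⟩

lemma coneHull_subset_recc {V D : Set (EuclideanSpace ℝ (Fin n))} :
    coneHull D ⊆ recc (convexHull ℝ V + coneHull D) := by
  intro r hr x hx t ht
  obtain ⟨x₀, hx₀, r₀, hr₀, rfl⟩ := hx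
  exact ⟨x₀, hx₀, r₀ + t • r, coneHull_add hr₀ (coneHull_smul hr ht), (add_assoc _ _ _).symm⟩

lemma degen_case {D : Set (EuclideanSpace ℝ (Fin n))}
    (hpt : ∀ r ∈ coneHull D, -r ∈ coneHull D → r = 0)
    {u w : ℝ} {ra rb : EuclideanSpace ℝ (Fin n)} (hu : 0 < u) (hw : 0 < w)
    (hra : ra ∈ coneHull D) (hrb : rb ∈ coneHull D) (h : u • ra + w • rb = 0) :
    ra = 0 ∧ rb = 0 := by
  have h1 : -(u • ra) = w • rb := by linear_combination (norm := module) -h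
  have h2 : u • ra = 0 := hpt _ (coneHull_smul hra hu.le) (h1 ▸ coneHull_smul hrb hw.le)
  have h3 : w • rb = 0 := by rw [← h1, h2, neg_zero]
  constructor
  · rcases smul_eq_zero.mp h2 with h | h
    · exact absurd h hu.ne'
    · exact h
  · rcases smul_eq_zero.mp h3 with h | h
    · exact absurd h hw.ne'
    · exact h

set_option maxHeartbeats 1000000 in
lemma remove_vertex {V D : Set (EuclideanSpace ℝ (Fin n))}
    (hpt : ∀ r ∈ coneHull D, -r ∈ coneHull D → r = 0)
    {v : EuclideanSpace ℝ (Fin n)} (hv : v ∈ V)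
    (hvP : v ∉ Set.extremePoints ℝ (convexHull ℝ V + coneHull D))
    (hvmem : v ∈ convexHull ℝ V + coneHull D) :
    v ∈ convexHull ℝ (V \ {v}) + coneHull D := by
  set P := convexHull ℝ V + coneHull D with hP
  rw [mem_extremePoints] at hvP
  push_neg at hvP
  obtain ⟨a, ha, b, hb, hseg, hab⟩ := hvP hvmem
  obtain ⟨u, w, hu, hw, huw, hE⟩ := hseg
  obtain ⟨a₀, ha₀, ra, hra, rfl⟩ := ha
  obtain ⟨b₀, hb₀, rb, hrb, rfl⟩ := hb
  -- decompose a₀, b₀ with respect to v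
  have hdecomp : ∀ x₀ ∈ convexHull ℝ V, ∃ α₁ α₂ : ℝ, ∃ y : EuclideanSpace ℝ (Fin n),
      0 ≤ α₁ ∧ 0 ≤ α₂ ∧ α₁ + α₂ = 1 ∧ (α₂ = 0 ∨ y ∈ convexHull ℝ (V \ {v})) ∧
      α₁ • v + α₂ • y = x₀ := by
    intro x₀ hx₀
    rcases Set.eq_empty_or_nonempty (V \ {v}) with hVv | hVv
    · have hV1 : V = {v} := subset_antisymm (by rwa [← Set.diff_eq_empty]) (by simpa using hv)
      rw [hV1, convexHull_singleton] at hx₀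
      exact ⟨1, 0, 0, zero_le_one, le_refl 0, by ring, Or.inl rfl, by simpa using hx₀.symm⟩
    · have hins : insert v (V \ {v}) = V := Set.insert_diff_singleton.trans (by simpa using hv)
      rw [← hins, convexHull_insert hVv] at hx₀
      rw [mem_convexJoin] at hx₀
      obtain ⟨x, hx, y, hy, hxy⟩ := hx₀
      obtain rfl : x = v := hx
      obtain ⟨α₁, α₂, hα₁, hα₂, hα, hsum⟩ := hxy
      exact ⟨α₁, α₂, y, hα₁, hα₂, hα, Or.inr hy, hsum⟩
  obtain ⟨α₁, α₂, wa, hα₁, hα₂, hα, hwa, hEa⟩ := hdecomp a₀ ha₀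
  obtain ⟨β₁, β₂, wb, hβ₁, hβ₂, hβ, hwb, hEb⟩ := hdecomp b₀ hb₀
  set κ := u * α₂ + w * β₂ with hκdef
  have hEfull : u • ((α₁ • v + α₂ • wa) + ra) + w • ((β₁ • v + β₂ • wb) + rb) = v := by
    rw [hEa, hEb]; exact hE
  have hκθ : κ + (u * α₁ + w * β₁) = 1 := by
    rw [hκdef]; linear_combination u * hα + w * hβ + huw
  have hE' : κ • v = (u * α₂) • wa + (w * β₂) • wb + (u • ra + w • rb) := by
    have h1 : (1 - (u * α₁ + w * β₁)) • v
        = (u * α₂) • wa + (w * β₂) • wb + (u • ra + w • rb) := by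
      linear_combination (norm := module) -hEfull
    have h2 : κ = 1 - (u * α₁ + w * β₁) := by linarith
    rw [h2]; exact h1
  have hκ0 : 0 ≤ κ := add_nonneg (mul_nonneg hu.le hα₂) (mul_nonneg hw.le hβ₂)
  rcases eq_or_lt_of_le hκ0 with hκ | hκ
  · -- κ = 0 : degenerate, contradiction
    exfalso
    have hκ0' : u * α₂ + w * β₂ = 0 := by rw [← hκdef, ← hκ]
    have h1 : u * α₂ = 0 := by nlinarith [mul_nonneg hu.le hα₂, mul_nonneg hw.le hβ₂]
    have h2 : w * β₂ = 0 := by nlinarith [mul_nonneg hu.le hα₂, mul_nonneg hw.le hβ₂]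
    have hα₂0 : α₂ = 0 := (mul_eq_zero.mp h1).resolve_left hu.ne'
    have hβ₂0 : β₂ = 0 := (mul_eq_zero.mp h2).resolve_left hw.ne'
    have h0 : u • ra + w • rb = 0 := by
      have := hE'
      rw [← hκ, hα₂0, hβ₂0] at this
      simpa using this.symm
    obtain ⟨hra0, hrb0⟩ := degen_case hpt hu hw hra hrb h0
    have hα₁1 : α₁ = 1 := by linarith
    have hβ₁1 : β₁ = 1 := by linarith
    refine hab ?_ ?_
    · show a₀ + ra = v
      rw [← hEa, hα₁1, hα₂0, hra0]; simp
    · show b₀ + rb = v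
      rw [← hEb, hβ₁1, hβ₂0, hrb0]; simp
  · -- κ > 0 : v ∈ conv (V \ {v}) + coneHull D
    have hwa' : wa ∈ convexHull ℝ (V \ {v}) ∨ u * α₂ = 0 := by
      rcases hwa with h | h
      · exact Or.inr (by rw [h, mul_zero])
      · exact Or.inl h
    have hwb' : wb ∈ convexHull ℝ (V \ {v}) ∨ w * β₂ = 0 := by
      rcases hwb with h | h
      · exact Or.inr (by rw [h, mul_zero])
      · exact Or.inl h
    have hn1 : 0 ≤ u * α₂ / κ := div_nonneg (mul_nonneg hu.le hα₂) hκ0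
    have hn2 : 0 ≤ w * β₂ / κ := div_nonneg (mul_nonneg hw.le hβ₂) hκ0
    have hsum : u * α₂ / κ + w * β₂ / κ = 1 := by
      rw [← add_div, ← hκdef, div_self hκ.ne']
    have key : (u * α₂ / κ) • wa + (w * β₂ / κ) • wb ∈ convexHull ℝ (V \ {v}) := by
      rcases hwa' with hwa1 | hwa0
      · rcases hwb' with hwb1 | hwb0
        · exact (convex_convexHull ℝ _) hwa1 hwb1 hn1 hn2 hsum
        · rw [hwb0] at hsum ⊢
          rw [zero_div, add_zero] at hsum
          rw [zero_div, zero_smul, add_zero, hsum, one_smul]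
          exact hwa1
      · rcases hwb' with hwb1 | hwb0
        · rw [hwa0] at hsum ⊢
          rw [zero_div, zero_add] at hsum
          rw [zero_div, zero_smul, zero_add, hsum, one_smul]
          exact hwb1
        · exfalso
          rw [hκdef, hwa0, hwb0] at hκ
          simp at hκ
    have h3 : κ⁻¹ • (κ • v) = v := by rw [smul_smul, inv_mul_cancel₀ hκ.ne', one_smul]
    have final : (u * α₂ / κ) • wa + (w * β₂ / κ) • wb + κ⁻¹ • (u • ra + w • rb) = v := by
      rw [← h3, hE']
      module
    exact ⟨(u * α₂ / κ) • wa + (w * β₂ / κ) • wb, key, κ⁻¹ • (u • ra + w • rb),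
      coneHull_smul (coneHull_add (coneHull_smul hra hu.le) (coneHull_smul hrb hw.le))
        (inv_nonneg.mpr hκ0), final⟩

lemma convex_coneHull {D : Set (EuclideanSpace ℝ (Fin n))} : Convex ℝ (coneHull D) := by
  intro x hx y hy a b ha hb hab
  exact coneHull_add (coneHull_smul hx ha) (coneHull_smul hy hb)

lemma minkowski_aux (D : Set (EuclideanSpace ℝ (Fin n))) (hD : D.Nonempty)
    (hpt : ∀ r ∈ coneHull D, -r ∈ coneHull D → r = 0) (N : ℕ) :
    ∀ V : Set (EuclideanSpace ℝ (Fin n)), V.Finite → V.ncard ≤ N →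
    convexHull ℝ V + coneHull D ⊆
      convexHull ℝ (Set.extremePoints ℝ (convexHull ℝ V + coneHull D)) + coneHull D := by
  induction N with
  | zero =>
    intro V hVfin hcard
    have hV : V = ∅ := by
      rw [← Set.ncard_eq_zero hVfin]
      omega
    rw [hV]
    simp only [convexHull_empty, Set.empty_add]
    exact Set.empty_subset _
  | succ N ih =>
    intro V hVfin hcard
    by_cases hsub : V ⊆ Set.extremePoints ℝ (convexHull ℝ V + coneHull D)
    · exact Set.add_subset_add_right (convexHull_mono hsub)
    · rw [Set.not_subset] at hsub
      obtain ⟨v, hv, hvP⟩ := hsub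
      have hvmem : v ∈ convexHull ℝ V + coneHull D :=
        ⟨v, subset_convexHull ℝ V hv, 0, zero_mem_coneHull hD, add_zero v⟩
      have hrem := remove_vertex hpt hv hvP hvmem
      have hconvRHS : Convex ℝ (convexHull ℝ (V \ {v}) + coneHull D) :=
        (convex_convexHull ℝ _).add convex_coneHull
      have hsub2 : convexHull ℝ V ⊆ convexHull ℝ (V \ {v}) + coneHull D := by
        apply convexHull_min _ hconvRHS
        intro u hu
        by_cases huv : u = v
        · rw [huv]; exact hrem
        · exact ⟨u, subset_convexHull ℝ _ ⟨hu, huv⟩, 0, zero_mem_coneHull hD, add_zero u⟩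
      have hPeq : convexHull ℝ V + coneHull D = convexHull ℝ (V \ {v}) + coneHull D := by
        apply subset_antisymm
        · intro x hx
          obtain ⟨x₀, hx₀, r, hr, rfl⟩ := hx
          obtain ⟨y, hy, r', hr', rfl⟩ := hsub2 hx₀
          exact ⟨y, hy, r' + r, coneHull_add hr' hr, (add_assoc y r' r).symm⟩
        · exact Set.add_subset_add_right (convexHull_mono Set.diff_subset)
      have hcard2 : (V \ {v}).ncard ≤ N := by
        have := Set.ncard_diff_singleton_add_one hv hVfin
        omega
      have h5 := ih (V \ {v}) hVfin.diff hcard2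
      rw [← hPeq] at h5
      rw [hPeq] at h5 ⊢
      exact h5

lemma minkowski {V D : Set (EuclideanSpace ℝ (Fin n))} (hD : D.Nonempty) (hVfin : V.Finite)
    (hpt : ∀ r ∈ coneHull D, -r ∈ coneHull D → r = 0) :
    convexHull ℝ V + coneHull D ⊆
      convexHull ℝ (Set.extremePoints ℝ (convexHull ℝ V + coneHull D)) + coneHull D :=
  minkowski_aux D hD hpt V.ncard V hVfin le_rfl

end Aux

set_option maxHeartbeats 1000000 in
theorem stmt9 {n : ℕ} (C : Set (EuclideanSpace ℝ (Fin n)))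
    (hne : C.Nonempty) (hcl : IsClosed C) (hcv : Convex ℝ C)
    (hpointed : ∀ d ∈ recc C, -d ∈ recc C → d = 0)
    (P : ℕ → Set (EuclideanSpace ℝ (Fin n))) (ε δ : ℕ → ℝ)
    (happrox : ∀ ν, IsEDApprox (P ν) C (ε ν) (δ ν))
    (hε : Tendsto ε atTop (nhds 0)) (hδ : Tendsto δ atTop (nhds 0)) :
    ∀ c ∈ Set.extremePoints ℝ C, ∃ x : ℕ → EuclideanSpace ℝ (Fin n),
      (∀ ν, x ν ∈ convexHull ℝ (Set.extremePoints ℝ (P ν))) ∧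
      Tendsto x atTop (nhds c) := by
  intro c hc
  -- decompose c over each P ν
  have hdec : ∀ ν, ∃ y z : EuclideanSpace ℝ (Fin n),
      y ∈ convexHull ℝ (Set.extremePoints ℝ (P ν)) ∧ z ∈ recc (P ν) ∧ c = y + z := by
    intro ν
    obtain ⟨hpoly, hptP, hexc, hhaus, hCP⟩ := happrox ν
    obtain ⟨V, D, hVfin, hDfin, hPeq⟩ := hpoly
    have hPne : (P ν).Nonempty := hne.mono hCP
    have hDne : D.Nonempty := by
      by_contra hD
      rw [Set.not_nonempty_iff_eq_empty] at hD
      rw [hD] at hPeq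
      have hch : coneHull (∅ : Set (EuclideanSpace ℝ (Fin n))) = ∅ := by
        ext x; simp [coneHull]
      rw [hch, Set.add_empty] at hPeq
      exact hPne.ne_empty hPeq
    have hptD : ∀ r ∈ coneHull D, -r ∈ coneHull D → r = 0 := by
      intro r hr hnr
      exact hptP r (by rw [hPeq]; exact coneHull_subset_recc hr)
        (by rw [hPeq]; exact coneHull_subset_recc hnr)
    have hcP : c ∈ P ν := hCP hc.1
    rw [hPeq] at hcP
    obtain ⟨y, hy, z, hz, hczy⟩ := minkowski hDne hVfin hptD hcP
    refine ⟨y, z, ?_, ?_, hczy.symm⟩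
    · rw [← hPeq] at hy; exact hy
    · rw [hPeq]; exact coneHull_subset_recc hz
  choose y z hy hz hcyz using hdec
  have hyz : ∀ ν, y ν = c - z ν := by
    intro ν; rw [hcyz ν]; abel
  refine ⟨y, hy, ?_⟩
  -- distance of y ν to C
  have hydist : ∀ ν, Metric.infDist (y ν) C ≤ max (ε ν) 0 := by
    intro ν
    obtain ⟨_, _, hexc, _, _⟩ := happrox ν
    unfold exc at hexc
    have hsub : Set.extremePoints ℝ (P ν) ⊆ Metric.cthickening (ε ν) C := by
      intro p hp
      rw [Metric.mem_cthickening_iff]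
      exact le_trans (le_iSup₂ (f := fun x (_ : x ∈ Set.extremePoints ℝ (P ν)) =>
        EMetric.infEdist x C) p hp) hexc
    have hy' : y ν ∈ Metric.cthickening (ε ν) C :=
      convexHull_min hsub (hcv.cthickening _) (hy ν)
    rw [Metric.mem_cthickening_iff] at hy'
    have h2 : EMetric.infEdist (y ν) C ≤ ENNReal.ofReal (max (ε ν) 0) :=
      le_trans hy' (ENNReal.ofReal_le_ofReal (le_max_left _ _))
    calc Metric.infDist (y ν) C = (EMetric.infEdist (y ν) C).toReal := rfl
      _ ≤ (ENNReal.ofReal (max (ε ν) 0)).toReal :=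
          ENNReal.toReal_mono (by simp) h2
      _ = max (ε ν) 0 := ENNReal.toReal_ofReal (le_max_right _ _)
  have hεmax : Tendsto (fun ν => max (ε ν) 0) atTop (𝓝 0) := by
    have h := hε.max (tendsto_const_nhds (x := (0:ℝ)))
    simpa using h
  -- main claim : z → 0
  have hz0 : Tendsto z atTop (𝓝 0) := by
    by_contra hnot
    rw [NormedAddCommGroup.tendsto_nhds_zero] at hnot
    push_neg at hnot
    obtain ⟨η, hη, hev⟩ := hnot
    obtain ⟨φ, hφmono, hφ⟩ := Filter.extraction_of_frequently_atTop hev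
    have hzne : ∀ k, z (φ k) ≠ 0 := by
      intro k h
      have := hφ k
      rw [h, norm_zero] at this
      linarith
    set d : ℕ → EuclideanSpace ℝ (Fin n) := fun k => ‖z (φ k)‖⁻¹ • z (φ k) with hd_def
    have hdnorm : ∀ k, ‖d k‖ = 1 := by
      intro k
      rw [hd_def]
      simp only [norm_smul, norm_inv, norm_norm]
      rw [inv_mul_cancel₀ (norm_ne_zero_iff.mpr (hzne k))]
    have hdmem : ∀ k, d k ∈ recc (P (φ k)) ∩ Metric.closedBall 0 1 := by
      intro k
      refine ⟨smul_mem_recc (hz (φ k)) (inv_nonneg.mpr (norm_nonneg _)), ?_⟩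
      rw [Metric.mem_closedBall, dist_zero_right, hdnorm k]
    -- extract convergent subsequence of directions
    obtain ⟨dinf, hdinfball, ψ, hψmono, hdconv⟩ :=
      tendsto_subseq_of_bounded (Metric.isBounded_closedBall (x := (0:EuclideanSpace ℝ (Fin n))) (r := 1))
        (fun k => (hdmem k).2)
    -- extract convergent subsequence of (1 + ‖z‖)⁻¹
    set sseq : ℕ → ℝ := fun j => (1 + ‖z (φ (ψ j))‖)⁻¹ with hsseq_def
    have hspos : ∀ j, 0 < 1 + ‖z (φ (ψ j))‖ := by
      intro j; positivity
    have hsmem : ∀ j, sseq j ∈ Set.Icc (0:ℝ) 1 := by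
      intro j
      constructor
      · exact inv_nonneg.mpr (hspos j).le
      · rw [hsseq_def]
        exact inv_le_one_of_one_le₀ (by linarith [norm_nonneg (z (φ (ψ j)))])
    obtain ⟨sinf, hsinfmem, χ, hχmono, hsconv⟩ :=
      tendsto_subseq_of_bounded (isBounded_Icc (0:ℝ) 1) hsmem
    rw [isClosed_Icc.closure_eq] at hsinfmem
    -- overall index map
    set m : ℕ → ℕ := fun k => φ (ψ (χ k)) with hm_def
    have hmmono : StrictMono m := hφmono.comp (hψmono.comp hχmono)
    have hmT : Tendsto m atTop atTop := hmmono.tendsto_atTop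
    set T : ℕ → ℝ := fun k => ‖z (m k)‖ with hT_def
    have hTη : ∀ k, η ≤ T k := fun k => hφ (ψ (χ k))
    have hTpos : ∀ k, 0 < T k := fun k => lt_of_lt_of_le hη (hTη k)
    set d' : ℕ → EuclideanSpace ℝ (Fin n) := fun k => d (ψ (χ k)) with hd'_def
    have hdconv' : Tendsto d' atTop (𝓝 dinf) := hdconv.comp hχmono.tendsto_atTop
    have hd'mem : ∀ k, d' k ∈ recc (P (m k)) ∩ Metric.closedBall 0 1 := fun k => hdmem (ψ (χ k))
    have hd'norm : ∀ k, ‖d' k‖ = 1 := fun k => hdnorm (ψ (χ k))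
    have hdinfnorm : ‖dinf‖ = 1 := by
      have h1 : Tendsto (fun k => ‖d' k‖) atTop (𝓝 ‖dinf‖) := hdconv'.norm
      have h2 : Tendsto (fun k => ‖d' k‖) atTop (𝓝 1) := by
        simp only [hd'norm]; exact tendsto_const_nhds
      exact tendsto_nhds_unique h1 h2
    -- find approximating recession directions of C
    have hfind : ∀ k, ∃ e ∈ recc C ∩ Metric.closedBall 0 1,
        dist (d' k) e < δ (m k) + 1 / (k + 1 : ℝ) := by
      intro k
      obtain ⟨_, _, _, hhaus, _⟩ := happrox (m k)
      have hne1 : (recc (P (m k)) ∩ Metric.closedBall (0:EuclideanSpace ℝ (Fin n)) 1).Nonempty :=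
        ⟨0, zero_mem_recc _, by simp⟩
      have hne2 : (recc C ∩ Metric.closedBall (0:EuclideanSpace ℝ (Fin n)) 1).Nonempty :=
        ⟨0, zero_mem_recc _, by simp⟩
      have hfin : EMetric.hausdorffEdist (recc (P (m k)) ∩ Metric.closedBall 0 1)
          (recc C ∩ Metric.closedBall (0:EuclideanSpace ℝ (Fin n)) 1) ≠ ⊤ :=
        Metric.hausdorffEdist_ne_top_of_nonempty_of_bounded hne1 hne2
          (Metric.isBounded_closedBall.subset Set.inter_subset_right)
          (Metric.isBounded_closedBall.subset Set.inter_subset_right)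
      have h1 : Metric.infDist (d' k) (recc C ∩ Metric.closedBall 0 1) ≤ δ (m k) :=
        le_trans (Metric.infDist_le_hausdorffDist_of_mem (hd'mem k) hfin) hhaus
      have h2 : Metric.infDist (d' k) (recc C ∩ Metric.closedBall 0 1) < δ (m k) + 1 / (k + 1 : ℝ) :=
        lt_of_le_of_lt h1 (by
          have : 0 < 1 / (k + 1 : ℝ) := by positivity
          linarith)
      rw [Metric.infDist_lt_iff hne2] at h2
      obtain ⟨e, he, hde⟩ := h2
      exact ⟨e, he, hde⟩
    choose e hemem hedist using hfind
    have hδm : Tendsto (fun k => δ (m k) + 1 / (k + 1 : ℝ)) atTop (𝓝 0) := by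
      have h1 : Tendsto (fun k => δ (m k)) atTop (𝓝 0) := hδ.comp hmT
      have h2 := h1.add tendsto_one_div_add_atTop_nhds_zero_nat
      simpa using h2
    have heconv : Tendsto e atTop (𝓝 dinf) := by
      have h1 : Tendsto (fun k => e k - d' k) atTop (𝓝 0) := by
        refine squeeze_zero_norm (fun k => ?_) hδm
        rw [← dist_eq_norm']
        exact (hedist k).le
      have h2 := hdconv'.add h1
      simp only [add_sub_cancel] at h2
      simpa using h2
    have hdinfrecc : dinf ∈ recc C ∩ Metric.closedBall 0 1 :=
      ((isClosed_recc hcl).inter Metric.isClosed_closedBall).mem_of_tendsto heconv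
        (Filter.Eventually.of_forall hemem)
    have hεm : Tendsto (fun k => max (ε (m k)) 0) atTop (𝓝 0) := hεmax.comp hmT
    -- case on sinf
    rcases eq_or_lt_of_le hsinfmem.1 with hs0 | hspos'
    · -- sinf = 0 : ‖z (m k)‖ → ∞, derive -dinf ∈ recc C
      have hTtop : Tendsto T atTop atTop := by
        have h1 : Tendsto (fun k => sseq (χ k)) atTop (𝓝[>] 0) := by
          rw [tendsto_nhdsWithin_iff]
          exact ⟨by rw [← hs0] at hsconv; exact hsconv,
            Filter.Eventually.of_forall fun k => inv_pos.mpr (hspos (χ k))⟩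
        have h2 : Tendsto (fun k => (sseq (χ k))⁻¹) atTop atTop :=
          tendsto_inv_nhdsGT_zero.comp h1
        have h3 : Tendsto (fun k => (sseq (χ k))⁻¹ - 1) atTop atTop :=
          tendsto_atTop_add_const_right _ (-1) h2 |>.congr (fun k => by ring)
        refine h3.congr fun k => ?_
        show (sseq (χ k))⁻¹ - 1 = T k
        rw [hsseq_def]
        simp only [inv_inv]
        show 1 + ‖z (φ (ψ (χ k)))‖ - 1 = T k
        rw [hT_def]; ring
      -- choose points of C near y (m k)
      have hu : ∀ k, ∃ u ∈ C, dist (y (m k)) u < max (ε (m k)) 0 + 1 / (k + 1 : ℝ) := by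
        intro k
        have h2 : Metric.infDist (y (m k)) C < max (ε (m k)) 0 + 1 / (k + 1 : ℝ) :=
          lt_of_le_of_lt (hydist (m k)) (by
            have : 0 < 1 / (k + 1 : ℝ) := by positivity
            linarith)
        rw [Metric.infDist_lt_iff hne] at h2
        exact h2
      choose u humem hudist using hu
      have hwconv : Tendsto (fun k => u k - y (m k)) atTop (𝓝 0) := by
        refine squeeze_zero_norm (fun k => ?_)
          (by simpa using (hεm.add tendsto_one_div_add_atTop_nhds_zero_nat))
        rw [← dist_eq_norm', ← one_div]
        exact (hudist k).le
      have hnd : -dinf ∈ recc C := by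
        intro x hx t ht
        have hq : ∀ k, T k ≠ 0 → x + (t / T k) • (u k - x)
            = x + (t / T k) • ((u k - y (m k)) + (c - x)) - t • d' k := by
          intro k hTk
          have hzz : z (m k) = T k • d' k := by
            rw [hd'_def, hd_def]
            show z (m k) = T k • (‖z (m k)‖⁻¹ • z (m k))
            rw [hT_def]
            rw [smul_smul, mul_inv_cancel₀ (norm_ne_zero_iff.mpr (hzne (ψ (χ k)))), one_smul]
          have hyy : y (m k) = c - T k • d' k := by rw [hyz (m k), hzz]
          rw [hyy]
          have hdiv : (t / T k) * T k = t := div_mul_cancel₀ t hTk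
          match_scalars <;> field_simp <;> simp
        have hqC : ∀ᶠ k in atTop, x + (t / T k) • (u k - x) ∈ C := by
          filter_upwards [hTtop.eventually_ge_atTop (max t 1)] with k hk
          have hTk1 : (1:ℝ) ≤ T k := le_trans (le_max_right t 1) hk
          have htT : t ≤ T k := le_trans (le_max_left t 1) hk
          have h0 : 0 < T k := lt_of_lt_of_le one_pos hTk1
          have ha : 0 ≤ t / T k := div_nonneg ht h0.le
          have hb : t / T k ≤ 1 := (div_le_one h0).mpr htT
          have hcomb := hcv hx (humem k) (by linarith : (0:ℝ) ≤ 1 - t / T k) ha (by ring)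
          convert hcomb using 1
          module
        have h1 : Tendsto (fun k => t / T k) atTop (𝓝 0) :=
          Tendsto.div_atTop tendsto_const_nhds hTtop
        have h3 : Tendsto (fun k => (t / T k) • ((u k - y (m k)) + (c - x))) atTop
            (𝓝 ((0:ℝ) • ((0:EuclideanSpace ℝ (Fin n)) + (c - x)))) :=
          h1.smul (hwconv.add tendsto_const_nhds)
        rw [zero_smul] at h3
        have h4 := ((tendsto_const_nhds (x := x)).add h3).sub (hdconv'.const_smul t)
        have h5 : Tendsto (fun k => x + (t / T k) • (u k - x)) atTop (𝓝 (x + 0 - t • dinf)) :=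
          h4.congr (fun k => (hq k (hTpos k).ne').symm)
        have h6 : x + 0 - t • dinf = x + t • (-dinf) := by module
        rw [h6] at h5
        exact hcl.mem_of_tendsto h5 hqC
      have : dinf = 0 := hpointed dinf hdinfrecc.1 hnd
      rw [this] at hdinfnorm
      simp at hdinfnorm
    · -- sinf > 0 : z (m k) converges, contradiction with extremality
      have hTconv : Tendsto T atTop (𝓝 (sinf⁻¹ - 1)) := by
        have h1 := (hsconv.inv₀ (ne_of_gt hspos')).sub (tendsto_const_nhds (x := (1:ℝ)))
        refine h1.congr fun k => ?_
        show (sseq (χ k))⁻¹ - 1 = T k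
        rw [hsseq_def]
        simp only [inv_inv]
        show 1 + ‖z (φ (ψ (χ k)))‖ - 1 = T k
        rw [hT_def]; ring
      set tinf : ℝ := sinf⁻¹ - 1 with htinf_def
      have htinfη : η ≤ tinf := ge_of_tendsto' hTconv hTη
      have hzconv : Tendsto (fun k => z (m k)) atTop (𝓝 (tinf • dinf)) := by
        have h1 := hTconv.smul hdconv'
        refine h1.congr fun k => ?_
        show T k • d' k = z (m k)
        rw [hd'_def, hd_def]
        show T k • (‖z (m k)‖⁻¹ • z (m k)) = z (m k)
        rw [hT_def, smul_smul, mul_inv_cancel₀ (norm_ne_zero_iff.mpr (hzne (ψ (χ k)))), one_smul]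
      set zinf : EuclideanSpace ℝ (Fin n) := tinf • dinf with hzinf_def
      have hyconv : Tendsto (fun k => y (m k)) atTop (𝓝 (c - zinf)) := by
        have h1 := (tendsto_const_nhds (x := c)).sub hzconv
        refine h1.congr fun k => (hyz (m k)).symm
      have hymem : c - zinf ∈ C := by
        rw [IsClosed.mem_iff_infDist_zero hcl hne]
        have h1 : Tendsto (fun k => Metric.infDist (y (m k)) C) atTop
            (𝓝 (Metric.infDist (c - zinf) C)) :=
          ((Metric.continuous_infDist_pt C).tendsto _).comp hyconv
        have h2 : Metric.infDist (c - zinf) C ≤ 0 :=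
          le_of_tendsto_of_tendsto' h1 hεm (fun k => hydist (m k))
        exact le_antisymm h2 (Metric.infDist_nonneg)
      have hzinfrecc : zinf ∈ recc C := smul_mem_recc hdinfrecc.1 (by linarith)
      have hzinfne : zinf ≠ 0 := by
        intro h
        rw [hzinf_def] at h
        rcases smul_eq_zero.mp h with h | h
        · linarith [htinfη, h]
        · rw [h, norm_zero] at hdinfnorm; linarith
      have hmem2 : c + zinf ∈ C := by
        have := hzinfrecc c hc.1 1 zero_le_one
        rwa [one_smul] at this
      have hseg : c ∈ openSegment ℝ (c - zinf) (c + zinf) := by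
        refine ⟨1/2, 1/2, by norm_num, by norm_num, by norm_num, ?_⟩
        module
      have := hc.2 hymem hmem2 hseg
      apply hzinfne
      have h5 : c - zinf = c := this
      have := sub_eq_self.mp h5
      exact this
  -- conclude
  have h1 := (tendsto_const_nhds (x := c)).sub hz0
  simp only [sub_zero] at h1
  refine h1.congr fun ν => (hyz ν).symm
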